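/- z_k equals the minimum, over binary vectors x ∈ {0,1}^n with Σ_{i=1}^n x_i = k, of G(Σ_{i=1}^n x_i a_i a_iᵀ; λ) + (d − k̃)/λ. -/

import Mathlib

open Matrix Finset

noncomputable section


/-- The information matrix `∑_{i ∈ S} a_i a_iᵀ + λ I_d`. -/
def infoM (d n : ℕ) (a : Fin n → Fin d → ℝ) (lam : ℝ) (S : Finset (Fin n)) :
    Matrix (Fin d) (Fin d) ℝ :=
  (∑ i ∈ S, Matrix.vecMulVec (a i) (a i)) + lam • (1 : Matrix (Fin d) (Fin d) ℝ)

/-- `f(S) = tr((∑_{i∈S} a_i a_iᵀ + λ I_d)⁻¹)`. -/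
def fS (d n : ℕ) (a : Fin n → Fin d → ℝ) (lam : ℝ) (S : Finset (Fin n)) : ℝ :=
  Matrix.trace (infoM d n a lam S)⁻¹

/-- `z_k = min_{|S| = k} f(S)`. -/
def zk (d n : ℕ) (a : Fin n → Fin d → ℝ) (lam : ℝ) (k : ℕ) : ℝ :=
  sInf {r : ℝ | ∃ S : Finset (Fin n), S.card = k ∧ fS d n a lam S = r}

open Classical in
/-- The eigenvalues of a symmetric matrix, listed in decreasing order with multiplicity
(and junk value `0` if the matrix is not symmetric). -/
def eigsDesc {d : ℕ} (X : Matrix (Fin d) (Fin d) ℝ) : Fin d → ℝ :=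
  if h : X.IsHermitian then (fun i => (h.eigenvalues ∘ Tuple.sort h.eigenvalues) i.rev)
  else fun _ => 0

/-- `idxVal σ j` is `σ_{j+1}` in one-based indexing (junk value `0` out of range). -/
def idxVal {m : ℕ} (σ : Fin m → ℝ) (j : ℕ) : ℝ := if h : j < m then σ ⟨j, h⟩ else 0

/-- `Σ_{i = η+1}^{m} σ_i` in one-based indexing. -/
def tailSum (m : ℕ) (σ : Fin m → ℝ) (η : ℕ) : ℝ :=
  ∑ i ∈ Finset.univ.filter (fun i : Fin m => η ≤ (i : ℕ)), σ i

/-- `η` is an integer with `0 ≤ η ≤ k-1` such that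
`σ_η > (1/(k-η)) Σ_{i=η+1}^{m} σ_i ≥ σ_{η+1}` (one-based indexing, convention `σ_0 = ∞`). -/
def isEnvIdx (m k : ℕ) (σ : Fin m → ℝ) (η : ℕ) : Prop :=
  η < k ∧ η < m ∧
  (η = 0 ∨ tailSum m σ η / ((k : ℝ) - η) < idxVal σ (η - 1)) ∧
  idxVal σ η ≤ tailSum m σ η / ((k : ℝ) - η)

/-- `Σ_{i=1}^{η} 1/(σ_i + λ) + (k-η)² / (Σ_{i=η+1}^{m} σ_i + (k-η)λ)`. -/
def envVal (m k : ℕ) (lam : ℝ) (σ : Fin m → ℝ) (η : ℕ) : ℝ :=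
  (∑ i ∈ Finset.univ.filter (fun i : Fin m => (i : ℕ) < η), 1 / (σ i + lam)) +
    ((k : ℝ) - η) ^ 2 / (tailSum m σ η + ((k : ℝ) - η) * lam)

open Classical in
/-- The function `G(X; λ)` (the convex envelope of `Γ(·;λ)`), defined via the unique index `η`;
with `lam = 0`, `d = n` and `kt = k`, this is the function `Φ`. -/
def Gfun (d kt : ℕ) (lam : ℝ) (X : Matrix (Fin d) (Fin d) ℝ) : ℝ :=
  if h : ∃ η, isEnvIdx d kt (eigsDesc X) η then envVal d kt lam (eigsDesc X) h.choose
  else 0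

end



lemma trace_inv_eq (d : ℕ) (X : Matrix (Fin d) (Fin d) ℝ) (hX : X.IsHermitian)
    (lam : ℝ) (hpos : ∀ i, 0 < hX.eigenvalues i + lam) :
    Matrix.trace (X + lam • 1)⁻¹ = ∑ i, 1 / (hX.eigenvalues i + lam) := by
  set U : Matrix (Fin d) (Fin d) ℝ := (hX.eigenvectorUnitary : Matrix (Fin d) (Fin d) ℝ) with hUdef
  have hU1 : U * star U = 1 := Matrix.mem_unitaryGroup_iff.mp hX.eigenvectorUnitary.2
  have hU2 : star U * U = 1 := Matrix.mem_unitaryGroup_iff'.mp hX.eigenvectorUnitary.2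
  set μ := hX.eigenvalues with hμdef
  have hdiag : Matrix.diagonal (RCLike.ofReal ∘ μ) = Matrix.diagonal μ := by
    congr 1
  have key : X + lam • 1 = U * Matrix.diagonal (fun i => μ i + lam) * star U := by
    conv_lhs => rw [hX.spectral_theorem, Unitary.conjStarAlgAut_apply, ← hUdef]
    have h1 : (lam • (1 : Matrix (Fin d) (Fin d) ℝ)) = U * (lam • 1) * star U := by
      rw [Matrix.mul_smul, Matrix.smul_mul, mul_one, hU1]
    rw [hdiag, h1, ← Matrix.add_mul, ← Matrix.mul_add]
    congr 2
    rw [Matrix.smul_one_eq_diagonal, Matrix.diagonal_add]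
  have hDE : Matrix.diagonal (fun i => μ i + lam) * Matrix.diagonal (fun i => (μ i + lam)⁻¹)
      = (1 : Matrix (Fin d) (Fin d) ℝ) := by
    rw [Matrix.diagonal_mul_diagonal]
    have h : (fun i => (μ i + lam) * (μ i + lam)⁻¹) = fun _ => (1:ℝ) :=
      funext fun i => mul_inv_cancel₀ (ne_of_gt (hpos i))
    rw [h, Matrix.diagonal_one]
  have hinv : (X + lam • 1)⁻¹ = U * Matrix.diagonal (fun i => (μ i + lam)⁻¹) * star U := by
    apply Matrix.inv_eq_right_inv
    rw [key]
    calc (U * Matrix.diagonal (fun i => μ i + lam) * star U) *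
          (U * Matrix.diagonal (fun i => (μ i + lam)⁻¹) * star U)
        = U * (Matrix.diagonal (fun i => μ i + lam) * ((star U * U) *
            (Matrix.diagonal (fun i => (μ i + lam)⁻¹) * star U))) := by
          simp only [Matrix.mul_assoc]
      _ = U * ((Matrix.diagonal (fun i => μ i + lam) * Matrix.diagonal (fun i => (μ i + lam)⁻¹)) * star U) := by
          rw [hU2, one_mul, Matrix.mul_assoc]
      _ = 1 := by rw [hDE, one_mul, hU1]
  rw [hinv, Matrix.trace_mul_cycle, hU2, one_mul, Matrix.trace_diagonal]
  simp [one_div]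

section Env
open Matrix Finset

lemma card_filter_between (m a b : ℕ) (hbm : b ≤ m) :
    (Finset.univ.filter (fun i : Fin m => a ≤ (i:ℕ) ∧ (i:ℕ) < b)).card = b - a := by
  rw [← Nat.card_Ico a b]
  refine Finset.card_bij (fun i _ => (i : ℕ)) ?_ ?_ ?_
  · intro i hi; simp only [mem_filter, mem_univ, true_and] at hi
    simp only [Finset.mem_Ico]; omega
  · intro i _ j _ h; exact Fin.val_injective h
  · intro j hj; simp only [Finset.mem_Ico] at hj
    exact ⟨⟨j, by omega⟩, by simp; omega, rfl⟩

lemma card_filter_ge (m b : ℕ) :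
    (Finset.univ.filter (fun i : Fin m => b ≤ (i:ℕ))).card = m - b := by
  rw [← Nat.card_Ico b m]
  refine Finset.card_bij (fun i _ => (i : ℕ)) ?_ ?_ ?_
  · intro i hi; simp only [mem_filter, mem_univ, true_and] at hi
    simp only [Finset.mem_Ico]; omega
  · intro i _ j _ h; exact Fin.val_injective h
  · intro j hj; simp only [Finset.mem_Ico] at hj
    exact ⟨⟨j, by omega⟩, by simp; omega, rfl⟩

lemma tailSum_eq_of_zero {m : ℕ} (σ : Fin m → ℝ) (b η : ℕ)
    (hz : ∀ i : Fin m, b ≤ (i:ℕ) → σ i = 0) :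
    tailSum m σ η = ∑ i ∈ Finset.univ.filter (fun i : Fin m => η ≤ (i:ℕ) ∧ (i:ℕ) < b), σ i := by
  unfold tailSum
  refine (Finset.sum_subset ?_ ?_).symm
  · intro i hi; simp only [mem_filter, mem_univ, true_and] at hi ⊢
    exact hi.1
  · intro i hi hni
    simp only [mem_filter, mem_univ, true_and] at hi hni
    exact hz i (by omega)

lemma tailSum_succ {m : ℕ} (σ : Fin m → ℝ) (j : ℕ) (hj : j < m) :
    tailSum m σ j = σ ⟨j, hj⟩ + tailSum m σ (j+1) := by
  unfold tailSum
  have h : Finset.univ.filter (fun i : Fin m => j ≤ (i:ℕ)) =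
      insert ⟨j, hj⟩ (Finset.univ.filter (fun i : Fin m => j+1 ≤ (i:ℕ))) := by
    ext i
    simp only [mem_filter, mem_univ, true_and, Finset.mem_insert, Fin.ext_iff]
    omega
  rw [h, Finset.sum_insert (by simp)]

end Env

section Env2
open Matrix Finset

lemma exists_envIdx' (m kt : ℕ) (σ : Fin m → ℝ) (hkm : kt ≤ m) (hk : 1 ≤ kt)
    (hz : ∀ i : Fin m, kt ≤ (i:ℕ) → σ i = 0) :
    ∃ η, isEnvIdx m kt σ η := by
  have hbase : ∃ j, j < kt ∧ idxVal σ j ≤ tailSum m σ j / ((kt:ℝ) - j) := by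
    refine ⟨kt - 1, by omega, ?_⟩
    have hlt : kt - 1 < m := by omega
    have hT : tailSum m σ (kt-1) = σ ⟨kt-1, hlt⟩ := by
      rw [tailSum_eq_of_zero σ kt (kt-1) hz]
      have : Finset.univ.filter (fun i : Fin m => kt-1 ≤ (i:ℕ) ∧ (i:ℕ) < kt)
          = {⟨kt-1, hlt⟩} := by
        ext i
        simp only [mem_filter, mem_univ, true_and, Finset.mem_singleton, Fin.ext_iff]
        omega
      rw [this, Finset.sum_singleton]
    have hcast : ((kt:ℝ) - ((kt-1 : ℕ):ℝ)) = 1 := by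
      have : ((kt-1 : ℕ):ℝ) = (kt:ℝ) - 1 := by
        rw [Nat.cast_sub hk]; simp
      rw [this]; ring
    rw [hT, hcast, div_one]
    unfold idxVal
    rw [dif_pos hlt]
  classical
  obtain ⟨j0, hj0⟩ := hbase
  let P : ℕ → Prop := fun j => j < kt ∧ idxVal σ j ≤ tailSum m σ j / ((kt:ℝ) - j)
  have hP : ∃ j, P j := ⟨j0, hj0⟩
  set η := Nat.find hP with hηdef
  have hspec : P η := Nat.find_spec hP
  have hηkt : η < kt := hspec.1
  have hηm : η < m := by omega
  refine ⟨η, hηkt, hηm, ?_, hspec.2⟩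
  rcases Nat.eq_zero_or_pos η with h0 | h0
  · exact Or.inl h0
  right
  have hmin : ¬ P (η - 1) := Nat.find_min hP (by omega)
  have hη1kt : η - 1 < kt := by omega
  have hη1m : η - 1 < m := by omega
  have hlt : tailSum m σ (η-1) / ((kt:ℝ) - ((η-1:ℕ):ℝ)) < idxVal σ (η-1) := by
    by_contra hcon
    push_neg at hcon
    exact hmin ⟨hη1kt, hcon⟩
  -- now convert
  have hrec : tailSum m σ (η-1) = σ ⟨η-1, hη1m⟩ + tailSum m σ η := by
    have := tailSum_succ σ (η-1) hη1m
    rwa [Nat.sub_add_cancel h0] at this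
  have hidx : idxVal σ (η-1) = σ ⟨η-1, hη1m⟩ := by unfold idxVal; rw [dif_pos hη1m]
  rw [hidx] at hlt ⊢
  have hcast : ((η-1:ℕ):ℝ) = (η:ℝ) - 1 := by rw [Nat.cast_sub h0]; simp
  rw [hcast] at hlt
  have hpos1 : (0:ℝ) < (kt:ℝ) - ((η:ℝ) - 1) := by
    have : (η:ℝ) ≤ (kt:ℝ) - 1 := by
      have : (η:ℝ) + 1 ≤ (kt:ℝ) := by exact_mod_cast hηkt
      linarith
    linarith
  have hpos2 : (0:ℝ) < (kt:ℝ) - (η:ℝ) := by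
    have : (η:ℝ) + 1 ≤ (kt:ℝ) := by exact_mod_cast hηkt
    linarith
  rw [div_lt_iff₀ hpos1] at hlt
  rw [div_lt_iff₀ hpos2]
  rw [hrec] at hlt
  nlinarith [hlt]

lemma envVal_eq_of (m kt : ℕ) (lam : ℝ) (hlam : 0 < lam) (σ : Fin m → ℝ)
    (hanti : Antitone σ) (hnn : ∀ i, 0 ≤ σ i) (hkm : kt ≤ m)
    (hz : ∀ i : Fin m, kt ≤ (i:ℕ) → σ i = 0)
    (η : ℕ) (hη : isEnvIdx m kt σ η) :
    envVal m kt lam σ η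
      = ∑ i ∈ Finset.univ.filter (fun i : Fin m => (i:ℕ) < kt), 1 / (σ i + lam) := by
  obtain ⟨hηkt, hηm, -, hle⟩ := hη
  set c := σ ⟨η, hηm⟩ with hc
  have hidx : idxVal σ η = c := by unfold idxVal; rw [dif_pos hηm]
  set F := Finset.univ.filter (fun i : Fin m => η ≤ (i:ℕ) ∧ (i:ℕ) < kt) with hF
  have hT : tailSum m σ η = ∑ i ∈ F, σ i := tailSum_eq_of_zero σ kt η hz
  have hcardF : F.card = kt - η := card_filter_between m η kt hkm
  have hub : ∀ i ∈ F, σ i ≤ c := by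
    intro i hi
    simp only [hF, mem_filter, mem_univ, true_and] at hi
    exact hanti (show (⟨η, hηm⟩ : Fin m) ≤ i from hi.1)
  have hpos2 : (0:ℝ) < (kt:ℝ) - (η:ℝ) := by
    have : (η:ℝ) + 1 ≤ (kt:ℝ) := by exact_mod_cast hηkt
    linarith
  have hkη : ((kt - η : ℕ):ℝ) = (kt:ℝ) - η := by
    rw [Nat.cast_sub (le_of_lt hηkt)]
  have hsum_le : ∑ i ∈ F, σ i ≤ ((kt:ℝ) - η) * c := by
    calc ∑ i ∈ F, σ i ≤ F.card • c := Finset.sum_le_card_nsmul F σ c hub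
      _ = ((kt:ℝ) - η) * c := by rw [hcardF, nsmul_eq_mul, hkη]
  have hge : ((kt:ℝ) - η) * c ≤ ∑ i ∈ F, σ i := by
    rw [hidx] at hle
    rw [← hT]
    calc ((kt:ℝ) - η) * c = c * ((kt:ℝ) - η) := by ring
      _ ≤ tailSum m σ η / ((kt:ℝ) - η) * ((kt:ℝ) - η) := by
          apply mul_le_mul_of_nonneg_right hle (le_of_lt hpos2)
      _ = tailSum m σ η := by field_simp
  have hTsum : ∑ i ∈ F, σ i = ((kt:ℝ) - η) * c := le_antisymm hsum_le hge
  -- each term equals c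
  have hall : ∀ i ∈ F, σ i = c := by
    have hzero : ∑ i ∈ F, (c - σ i) = 0 := by
      rw [Finset.sum_sub_distrib, Finset.sum_const, hTsum, hcardF, nsmul_eq_mul, hkη]
      ring
    intro i hi
    have := (Finset.sum_eq_zero_iff_of_nonneg (fun j hj => by
      have := hub j hj; linarith)).mp hzero i hi
    linarith
  -- compute
  have hclam : (0:ℝ) < c + lam := by have := hnn ⟨η, hηm⟩; rw [← hc] at this; linarith
  unfold envVal
  rw [hT, hTsum]
  have hterm2 : ((kt:ℝ) - η) ^ 2 / (((kt:ℝ) - η) * c + ((kt:ℝ) - η) * lam)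
      = ((kt:ℝ) - η) * (1 / (c + lam)) := by
    rw [← mul_add]
    field_simp
  rw [hterm2]
  have hsumF : ∑ i ∈ F, 1 / (σ i + lam) = ((kt:ℝ) - η) * (1 / (c + lam)) := by
    rw [Finset.sum_congr rfl (fun i hi => by rw [hall i hi]), Finset.sum_const,
      hcardF, nsmul_eq_mul, hkη]
  rw [← hsumF]
  -- split the filter
  have hsplit : Finset.univ.filter (fun i : Fin m => (i:ℕ) < kt)
      = (Finset.univ.filter (fun i : Fin m => (i:ℕ) < η)) ∪ F := by
    ext i
    simp only [hF, mem_filter, mem_univ, true_and, Finset.mem_union]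
    omega
  rw [hsplit, Finset.sum_union]
  rw [Finset.disjoint_left]
  intro i hi1 hi2
  simp only [hF, mem_filter, mem_univ, true_and] at hi1 hi2
  omega

end Env2

section Key
open Matrix Finset

lemma card_filter_lt (m b : ℕ) (hbm : b ≤ m) :
    (Finset.univ.filter (fun i : Fin m => (i:ℕ) < b)).card = b := by
  have := card_filter_between m 0 b hbm
  have heq : Finset.univ.filter (fun i : Fin m => 0 ≤ (i:ℕ) ∧ (i:ℕ) < b)
      = Finset.univ.filter (fun i : Fin m => (i:ℕ) < b) := by
    ext i; simp
  rw [heq] at this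
  omega

lemma matrix_rank_add_le {d : ℕ} (A B : Matrix (Fin d) (Fin d) ℝ) :
    (A + B).rank ≤ A.rank + B.rank := by
  unfold Matrix.rank
  rw [Matrix.mulVecLin_add]
  have hsub : LinearMap.range (A.mulVecLin + B.mulVecLin) ≤
      LinearMap.range A.mulVecLin ⊔ LinearMap.range B.mulVecLin := by
    rintro y ⟨x, rfl⟩
    exact Submodule.add_mem_sup ⟨x, rfl⟩ ⟨x, rfl⟩
  refine le_trans (Submodule.finrank_mono hsub) ?_
  exact Submodule.finrank_add_le_finrank_add_finrank _ _

lemma posSemidef_vecMulVec' {d : ℕ} (v : Fin d → ℝ) : (Matrix.vecMulVec v v).PosSemidef := by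
  have h : Matrix.vecMulVec v v = (Matrix.replicateRow Unit v)ᴴ * Matrix.replicateRow Unit v := by
    rw [Matrix.conjTranspose_replicateRow, Matrix.vecMulVec_eq Unit]; simp
  rw [h]; exact Matrix.posSemidef_conjTranspose_mul_self _

lemma rank_vecMulVec_le' {d : ℕ} (v : Fin d → ℝ) : (Matrix.vecMulVec v v).rank ≤ 1 := by
  rw [Matrix.vecMulVec_eq Unit]
  exact le_trans (Matrix.rank_mul_le_left _ _)
    (by simpa using Matrix.rank_le_card_width (Matrix.replicateCol Unit v))

lemma sum_vecMulVec_posSemidef {d n : ℕ} (a : Fin n → Fin d → ℝ) (S : Finset (Fin n)) :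
    (∑ i ∈ S, Matrix.vecMulVec (a i) (a i)).PosSemidef := by
  classical
  induction S using Finset.induction with
  | empty => simpa using Matrix.PosSemidef.zero
  | insert _ _ hnot ih =>
    rw [Finset.sum_insert hnot]
    exact (posSemidef_vecMulVec' _).add ih

lemma sum_vecMulVec_rank_le {d n : ℕ} (a : Fin n → Fin d → ℝ) (S : Finset (Fin n)) :
    (∑ i ∈ S, Matrix.vecMulVec (a i) (a i)).rank ≤ S.card := by
  classical
  induction S using Finset.induction with
  | empty => simp [Matrix.rank_zero]
  | insert s T hnot ih =>
    rw [Finset.sum_insert hnot, Finset.card_insert_of_notMem hnot]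
    calc (Matrix.vecMulVec (a s) (a s) + ∑ i ∈ T, Matrix.vecMulVec (a i) (a i)).rank
        ≤ (Matrix.vecMulVec (a s) (a s)).rank + (∑ i ∈ T, Matrix.vecMulVec (a i) (a i)).rank :=
          matrix_rank_add_le _ _
      _ ≤ 1 + T.card := Nat.add_le_add (rank_vecMulVec_le' _) ih
      _ = T.card + 1 := by omega

lemma key_trace (d k : ℕ) (hd : 1 ≤ d) (hk : 1 ≤ k) (lam : ℝ) (hlam : 0 < lam)
    (X : Matrix (Fin d) (Fin d) ℝ) (hpsd : X.PosSemidef) (hrank : X.rank ≤ min k d) :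
    Gfun d (min k d) lam X + ((d:ℝ) - ((min k d : ℕ):ℝ)) / lam
      = Matrix.trace (X + lam • 1)⁻¹ := by
  classical
  have hX : X.IsHermitian := hpsd.isHermitian
  set kt := min k d with hkt
  have hktd : kt ≤ d := min_le_right _ _
  have hkt1 : 1 ≤ kt := le_min hk hd
  set μ := hX.eigenvalues with hμ
  set e : Equiv.Perm (Fin d) := (Fin.revPerm).trans (Tuple.sort μ) with he
  have hσdef : eigsDesc X = fun i => μ (e i) := by
    unfold eigsDesc
    rw [dif_pos hX]
    funext i
    simp [he, hμ]
  set σ : Fin d → ℝ := fun i => μ (e i) with hσ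
  have hanti : Antitone σ := by
    intro i j hij
    have h1 : j.rev ≤ i.rev := Fin.rev_le_rev.mpr hij
    exact Tuple.monotone_sort μ h1
  have hnn : ∀ i, 0 ≤ σ i := fun i => hpsd.eigenvalues_nonneg _
  have hcard : (Finset.univ.filter (fun i : Fin d => σ i ≠ 0)).card = X.rank := by
    rw [hX.rank_eq_card_non_zero_eigs]
    rw [← Fintype.card_subtype]
    exact Fintype.card_congr (e.subtypeEquiv (fun a => Iff.rfl))
  have hz : ∀ i : Fin d, kt ≤ (i:ℕ) → σ i = 0 := by
    intro i hi
    by_contra hne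
    have hpos : 0 < σ i := lt_of_le_of_ne (hnn i) (Ne.symm hne)
    have hsubset : Finset.univ.filter (fun j : Fin d => (j:ℕ) < (i:ℕ)+1)
        ⊆ Finset.univ.filter (fun j : Fin d => σ j ≠ 0) := by
      intro j hj
      simp only [mem_filter, mem_univ, true_and] at hj ⊢
      have hji : j ≤ i := by
        rw [Fin.le_def]; omega
      have := hanti hji
      intro h0
      rw [h0] at this
      linarith
    have hc1 : (Finset.univ.filter (fun j : Fin d => (j:ℕ) < (i:ℕ)+1)).card = (i:ℕ)+1 :=
      card_filter_lt d ((i:ℕ)+1) (by omega)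
    have hc2 := Finset.card_le_card hsubset
    rw [hc1, hcard] at hc2
    omega
  have hex : ∃ η, isEnvIdx d kt (eigsDesc X) η := by
    rw [hσdef]
    exact exists_envIdx' d kt σ hktd hkt1 hz
  -- compute Gfun
  have hG : Gfun d kt lam X
      = ∑ i ∈ Finset.univ.filter (fun i : Fin d => (i:ℕ) < kt), 1 / (σ i + lam) := by
    unfold Gfun
    rw [dif_pos hex]
    have hspec := hex.choose_spec
    revert hspec
    generalize hex.choose = η
    intro hspec
    rw [hσdef] at hspec
    rw [hσdef]
    exact envVal_eq_of d kt lam hlam σ hanti hnn hktd hz _ hspec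
  -- trace side
  have hpos' : ∀ i, 0 < μ i + lam := fun i => by
    have := hpsd.eigenvalues_nonneg i; linarith
  have htr : Matrix.trace (X + lam • 1)⁻¹ = ∑ i, 1 / (μ i + lam) :=
    trace_inv_eq d X hX lam hpos'
  have hsumeq : ∑ i, 1 / (σ i + lam) = ∑ i, 1 / (μ i + lam) :=
    Equiv.sum_comp e (fun j => 1 / (μ j + lam))
  have hsplit := Finset.sum_filter_add_sum_filter_not Finset.univ
    (fun i : Fin d => (i:ℕ) < kt) (fun i => 1 / (σ i + lam))
  have hfilter_not : Finset.univ.filter (fun i : Fin d => ¬ (i:ℕ) < kt)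
      = Finset.univ.filter (fun i : Fin d => kt ≤ (i:ℕ)) := by
    ext i; simp [not_lt]
  have htail : ∑ i ∈ Finset.univ.filter (fun i : Fin d => ¬ (i:ℕ) < kt), 1 / (σ i + lam)
      = ((d:ℝ) - (kt:ℝ)) / lam := by
    rw [hfilter_not]
    rw [Finset.sum_congr rfl (fun i hi => by
      simp only [mem_filter, mem_univ, true_and] at hi
      rw [hz i hi, zero_add])]
    rw [Finset.sum_const, card_filter_ge, nsmul_eq_mul]
    rw [Nat.cast_sub hktd]
    rw [one_div, div_eq_mul_inv]
  rw [hG, htr, ← hsumeq, ← hsplit, htail]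

theorem stmt14 (d n : ℕ) (hd : 1 ≤ d) (hdn : d ≤ n)
    (a : Fin n → Fin d → ℝ) (lam : ℝ) (hlam : 0 < lam)
    (k : ℕ) (hk1 : 1 ≤ k) (hkn : k ≤ n) :
    zk d n a lam k =
      sInf {r : ℝ | ∃ x : Fin n → ℝ, (∀ i, x i = 0 ∨ x i = 1) ∧ (∑ i, x i) = (k : ℝ) ∧
        Gfun d (min k d) lam (∑ i : Fin n, x i • Matrix.vecMulVec (a i) (a i)) +
          ((d : ℝ) - (min k d : ℕ)) / lam = r} := by

  classical
  have hval : ∀ S : Finset (Fin n), S.card = k →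
      Gfun d (min k d) lam (∑ i ∈ S, Matrix.vecMulVec (a i) (a i)) +
        ((d : ℝ) - ((min k d : ℕ) : ℝ)) / lam = fS d n a lam S := by
    intro S hS
    have hpsd := sum_vecMulVec_posSemidef a S
    have hrank : (∑ i ∈ S, Matrix.vecMulVec (a i) (a i)).rank ≤ min k d := by
      refine le_min ?_ ?_
      · exact le_trans (sum_vecMulVec_rank_le a S) (le_of_eq hS)
      · simpa using Matrix.rank_le_card_width (∑ i ∈ S, Matrix.vecMulVec (a i) (a i))
    have := key_trace d k hd hk1 lam hlam _ hpsd hrank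
    rw [this]
    rfl
  unfold zk
  congr 1
  ext r
  constructor
  · rintro ⟨S, hS, rfl⟩
    refine ⟨fun i => if i ∈ S then 1 else 0, fun i => by by_cases h : i ∈ S <;> simp [h], ?_, ?_⟩
    · rw [Finset.sum_ite_mem, Finset.univ_inter, Finset.sum_const, hS]
      simp
    · have hX : (∑ i : Fin n, (if i ∈ S then (1:ℝ) else 0) • Matrix.vecMulVec (a i) (a i))
          = ∑ i ∈ S, Matrix.vecMulVec (a i) (a i) := by
        simp only [ite_smul, one_smul, zero_smul]
        rw [Finset.sum_ite_mem, Finset.univ_inter]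
      rw [hX]
      exact hval S hS
  · rintro ⟨x, hbin, hsum, rfl⟩
    set S := Finset.univ.filter (fun i => x i = 1) with hSdef
    have hsum1 : ∑ i, x i = (S.card : ℝ) := by
      rw [← Finset.sum_filter_add_sum_filter_not Finset.univ (fun i => x i = 1) x]
      have h1 : ∑ i ∈ Finset.univ.filter (fun i => x i = 1), x i = (S.card : ℝ) := by
        rw [Finset.sum_congr rfl (fun i hi => by
          simp only [mem_filter, mem_univ, true_and] at hi; exact hi)]
        simp
        rfl
      have h2 : ∑ i ∈ Finset.univ.filter (fun i => ¬ x i = 1), x i = 0 := by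
        apply Finset.sum_eq_zero
        intro i hi
        simp only [mem_filter, mem_univ, true_and] at hi
        rcases hbin i with h | h
        · exact h
        · exact absurd h hi
      rw [h1, h2, add_zero]
    have hcard : S.card = k := by
      have : ((S.card : ℕ) : ℝ) = (k : ℝ) := by rw [← hsum1, hsum]
      exact_mod_cast this
    have hX : (∑ i : Fin n, x i • Matrix.vecMulVec (a i) (a i))
        = ∑ i ∈ S, Matrix.vecMulVec (a i) (a i) := by
      rw [← Finset.sum_filter_add_sum_filter_not Finset.univ (fun i => x i = 1)
        (fun i => x i • Matrix.vecMulVec (a i) (a i))]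
      have h2 : ∑ i ∈ Finset.univ.filter (fun i => ¬ x i = 1),
          x i • Matrix.vecMulVec (a i) (a i) = 0 := by
        apply Finset.sum_eq_zero
        intro i hi
        simp only [mem_filter, mem_univ, true_and] at hi
        rcases hbin i with h | h
        · rw [h, zero_smul]
        · exact absurd h hi
      rw [h2, add_zero]
      apply Finset.sum_congr rfl
      intro i hi
      simp only [hSdef, mem_filter, mem_univ, true_and] at hi
      rw [hi, one_smul]
    refine ⟨S, hcard, ?_⟩
    rw [← hval S hcard, hX]
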